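/- arXiv:2305.11640 — 3 statements merged into one kernel-verified Lean document; each statement's English description precedes it below -/
import Mathlib

section
/- Let R_1, ..., R_{n+1} be exchangeable real-valued random variables. Then the probability that R_{n+1} is at most the ceiling((1-α)(n+1))-th smallest value among R_1, ..., R_{n+1} is at least 1-α. -/
open MeasureTheory ProbabilityTheory Finset
open scoped ENNReal NNReal

/-- The `k`-th smallest value (1-indexed, clamped to valid range) of `x`. -/
noncomputable def orderStat {n : ℕ} [NeZero n] (k : ℕ) (x : Fin n → ℝ) : ℝ :=
  x (Tuple.sort x ⟨min (k - 1) (n - 1), by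
    have h := Nat.pos_of_ne_zero (NeZero.ne n); omega⟩)

/-- The lower `β`-quantile of the empirical distribution `(1/n) ∑ δ_{x j}`,
i.e. the `⌈β n⌉`-th smallest of the `x j`. -/
noncomputable def empQuantile {n : ℕ} [NeZero n] (β : ℝ) (x : Fin n → ℝ) : ℝ :=
  orderStat ⌈β * n⌉₊ x

lemma orderStat_comp_perm {n : ℕ} [NeZero n] (k : ℕ) (x : Fin n → ℝ)
    (π : Equiv.Perm (Fin n)) : orderStat k (x ∘ π) = orderStat k x := by
  have h := Tuple.comp_perm_comp_sort_eq_comp_sort (σ := π) (f := x)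
  exact congrFun h _

lemma orderStat_le_iff {n : ℕ} [NeZero n] (k : ℕ) (x : Fin n → ℝ) (a : ℝ) :
    orderStat k x ≤ a ↔
      min (k - 1) (n - 1) + 1 ≤ (univ.filter fun i => x i ≤ a).card := by
  have hn : 0 < n := Nat.pos_of_ne_zero (NeZero.ne n)
  set σ := Tuple.sort x with hσ
  have hmono : Monotone (x ∘ σ) := Tuple.monotone_sort x
  set m : Fin n := ⟨min (k - 1) (n - 1), by omega⟩ with hm
  have h1 : orderStat k x = (x ∘ σ) m := rfl
  rw [h1, ← Tuple.lt_card_le_iff_apply_le_of_monotone (a := a) (h_sorted := hmono) (j := m),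
    ← Fintype.card_subtype]
  have h2 : Fintype.card {i // (x ∘ σ) i ≤ a} = Fintype.card {i // x i ≤ a} :=
    Fintype.card_congr (σ.subtypeEquiv fun i => Iff.rfl)
  rw [h2, Fintype.card_subtype]
  have hmv : (m : ℕ) = min (k - 1) (n - 1) := rfl
  constructor <;> intro h <;> omega

lemma le_card_le_orderStat {n : ℕ} [NeZero n] {k : ℕ} (hk1 : 1 ≤ k) (hkn : k ≤ n)
    (x : Fin n → ℝ) :
    k ≤ (univ.filter fun i => x i ≤ orderStat k x).card := by
  have h := (orderStat_le_iff k x (orderStat k x)).1 le_rfl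
  omega

lemma measurable_orderStat {n : ℕ} [NeZero n] (k : ℕ) :
    Measurable (orderStat (n := n) k) := by
  apply measurable_of_Iic
  intro a
  have : orderStat (n := n) k ⁻¹' Set.Iic a =
      ⋃ s ∈ univ.powersetCard (min (k - 1) (n - 1) + 1),
        ⋂ i ∈ s, {x : Fin n → ℝ | x i ≤ a} := by
    ext x
    simp only [Set.mem_preimage, Set.mem_Iic, orderStat_le_iff, Set.mem_iUnion,
      Set.mem_iInter, Set.mem_setOf_eq, Finset.mem_powersetCard]
    constructor
    · intro h
      obtain ⟨t, hts, htc⟩ := Finset.exists_subset_card_eq h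
      exact ⟨t, ⟨⟨fun i _ => mem_univ i, htc⟩,
        fun i hi => (mem_filter.1 (hts hi)).2⟩⟩
    · rintro ⟨s, ⟨⟨-, hcard⟩, hx⟩⟩
      calc min (k - 1) (n - 1) + 1 = s.card := hcard.symm
        _ ≤ _ := Finset.card_le_card fun i hi => mem_filter.2 ⟨mem_univ i, hx i hi⟩
  rw [this]
  exact MeasurableSet.biUnion (Finset.countable_toSet _) fun s _ =>
    MeasurableSet.biInter (Finset.countable_toSet _) fun i _ =>
      measurableSet_le (measurable_pi_apply i) measurable_const

/-- quantile lemma for exchangeable variables: if `R 0, …, R n` are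
exchangeable, then `R n` is at most the `⌈(1-α)(n+1)⌉`-th smallest of all `n+1`
values with probability at least `1 - α`. -/
theorem exchangeable_quantile_lower_bound
    {Ω : Type*} [MeasurableSpace Ω] (P : Measure Ω) [IsProbabilityMeasure P]
    (n : ℕ) (R : Fin (n + 1) → Ω → ℝ) (hmeas : ∀ i, Measurable (R i))
    (hexch : ∀ π : Equiv.Perm (Fin (n + 1)),
      P.map (fun ω => fun i => R (π i) ω) = P.map (fun ω => fun i => R i ω))
    (α : ℝ) (hα : α ∈ Set.Ioo (0 : ℝ) 1) :
    ENNReal.ofReal (1 - α) ≤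
      P {ω | R (Fin.last n) ω ≤
        orderStat ⌈(1 - α) * (n + 1)⌉₊ (fun i => R i ω)} := by
  obtain ⟨hα0, hα1⟩ := hα
  set k : ℕ := ⌈(1 - α) * (n + 1)⌉₊ with hk
  have hpos : (0 : ℝ) < (1 - α) * (n + 1) := by
    have h1 : (0:ℝ) < 1 - α := by linarith
    positivity
  have hk1 : 1 ≤ k := Nat.ceil_pos.2 hpos
  have hkn : k ≤ n + 1 := by
    rw [hk]
    apply Nat.ceil_le.2
    have : (1 - α) * (n + 1) ≤ 1 * (n + 1) := by nlinarith
    push_cast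
    linarith
  -- the joint map
  set T : Ω → (Fin (n + 1) → ℝ) := fun ω i => R i ω with hT
  have hTmeas : Measurable T := measurable_pi_lambda _ hmeas
  -- the sets
  set S : Fin (n + 1) → Set (Fin (n + 1) → ℝ) :=
    fun i => {x | x i ≤ orderStat k x} with hS
  have hSmeas : ∀ i, MeasurableSet (S i) := fun i =>
    measurableSet_le (measurable_pi_apply i) (measurable_orderStat k)
  set A : Fin (n + 1) → Set Ω := fun i => T ⁻¹' (S i) with hA
  have hAmeas : ∀ i, MeasurableSet (A i) := fun i => hTmeas (hSmeas i)
  -- equal probabilities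
  have hconst : ∀ i, P (A i) = P (A (Fin.last n)) := by
    intro i
    set π := Equiv.swap (Fin.last n) i with hπ
    have h := hexch π
    have h1 : P.map (fun ω => fun j => R (π j) ω) (S (Fin.last n))
        = P.map T (S (Fin.last n)) := by rw [h]
    rw [Measure.map_apply (measurable_pi_lambda _ fun j => hmeas (π j))
        (hSmeas _), Measure.map_apply hTmeas (hSmeas _)] at h1
    have h2 : (fun ω => fun j => R (π j) ω) ⁻¹' S (Fin.last n) = A i := by
      ext ω
      have hperm : orderStat k ((T ω) ∘ π) = orderStat k (T ω) :=
        orderStat_comp_perm k (T ω) π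
      have hlast : π (Fin.last n) = i := Equiv.swap_apply_left _ _
      show R (π (Fin.last n)) ω ≤ orderStat k ((T ω) ∘ π) ↔
        R i ω ≤ orderStat k (T ω)
      rw [hperm, hlast]
    rw [h2] at h1
    exact h1
  -- counting bound pointwise
  have hcount : ∀ ω, (k : ℝ≥0∞) ≤ ∑ i, (A i).indicator (fun _ => (1 : ℝ≥0∞)) ω := by
    intro ω
    have hcard := le_card_le_orderStat hk1 hkn (T ω)
    have : ∑ i, (A i).indicator (fun _ => (1 : ℝ≥0∞)) ω
        = ((univ.filter fun i => T ω i ≤ orderStat k (T ω)).card : ℝ≥0∞) := by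
      rw [Finset.card_filter]
      push_cast
      apply Finset.sum_congr rfl
      intro i _
      by_cases hi : T ω i ≤ orderStat k (T ω)
      · simp [Set.indicator, hA, hS, hi]
      · simp [Set.indicator, hA, hS, hi]
    rw [this]
    exact_mod_cast Nat.cast_le.2 hcard
  -- integrate
  have hsum : (k : ℝ≥0∞) ≤ ∑ i, P (A i) := by
    have h1 : (k : ℝ≥0∞) = ∫⁻ _, (k : ℝ≥0∞) ∂P := by simp
    rw [h1]
    calc ∫⁻ _, (k : ℝ≥0∞) ∂P
        ≤ ∫⁻ ω, ∑ i, (A i).indicator (fun _ => (1 : ℝ≥0∞)) ω ∂P :=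
          lintegral_mono hcount
      _ = ∑ i, ∫⁻ ω, (A i).indicator (fun _ => (1 : ℝ≥0∞)) ω ∂P :=
          lintegral_finset_sum _ fun i _ =>
            (measurable_const.indicator (hAmeas i))
      _ = ∑ i, P (A i) := by
          apply Finset.sum_congr rfl
          intro i _
          rw [lintegral_indicator (hAmeas i)]
          simp
  have hsum' : (k : ℝ≥0∞) ≤ ((n : ℝ≥0∞) + 1) * P (A (Fin.last n)) := by
    refine hsum.trans (le_of_eq ?_)
    rw [Finset.sum_congr rfl fun i _ => hconst i, Finset.sum_const, card_univ,
      Fintype.card_fin, nsmul_eq_mul]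
    push_cast
    ring
  -- conclude
  have hgoal : ENNReal.ofReal (1 - α) ≤ P (A (Fin.last n)) := by
    have hne : ((n : ℝ≥0∞) + 1) ≠ 0 := by simp
    have hnetop : ((n : ℝ≥0∞) + 1) ≠ ⊤ :=
      ENNReal.add_ne_top.2 ⟨ENNReal.natCast_ne_top n, ENNReal.one_ne_top⟩
    rw [← ENNReal.mul_le_mul_iff_right hne hnetop]
    refine le_trans ?_ hsum'
    have : ((n : ℝ≥0∞) + 1) = ENNReal.ofReal ((n : ℝ) + 1) := by
      rw [ENNReal.ofReal_add (by positivity) (by norm_num)]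
      simp
    rw [this, ← ENNReal.ofReal_mul (by positivity)]
    rw [show ((k : ℝ≥0∞)) = ENNReal.ofReal (k : ℝ) by simp]
    apply ENNReal.ofReal_le_ofReal
    rw [mul_comm]
    exact Nat.le_ceil _
  exact hgoal
end

section
/- Let R_1, ..., R_{n+1} be exchangeable real-valued random variables that are almost surely pairwise distinct. Then P(R_{n+1} ≤ ⌈(1-α)(n+1)⌉-th order statistic of R_1,...,R_{n+1}) ≤ 1 - α + 1/(n+1). -/
open MeasureTheory ProbabilityTheory Finset ENNReal

/-- rank of `x i`: number of `j` with `x j ≤ x i`. -/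
noncomputable def rk {n : ℕ} (x : Fin n → ℝ) (i : Fin n) : ℕ :=
  (Finset.univ.filter fun j => x j ≤ x i).card

lemma le_sort_iff {n : ℕ} {x : Fin (n + 1) → ℝ} (hx : Function.Injective x)
    (i m : Fin (n + 1)) :
    x i ≤ x (Tuple.sort x m) ↔ (Tuple.sort x).symm i ≤ m := by
  have hf : StrictMono (x ∘ Tuple.sort x) :=
    (Tuple.monotone_sort x).strictMono_of_injective (hx.comp (Tuple.sort x).injective)
  have h : x i = (x ∘ Tuple.sort x) ((Tuple.sort x).symm i) := by simp
  rw [h]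
  exact hf.le_iff_le

lemma rk_eq {n : ℕ} {x : Fin (n + 1) → ℝ} (hx : Function.Injective x) (i : Fin (n + 1)) :
    rk x i = ((Tuple.sort x).symm i : Fin (n + 1)).val + 1 := by
  set σ := Tuple.sort x
  have key : ∀ j, (x j ≤ x i ↔ σ.symm j ≤ σ.symm i) := by
    intro j
    have := le_sort_iff hx j (σ.symm i)
    simpa [σ] using this
  unfold rk
  have h1 : (Finset.univ.filter fun j => x j ≤ x i) =
      (Finset.univ.filter fun j => j ≤ σ.symm i).map ⟨σ, σ.injective⟩ := by
    ext j
    simp only [Finset.mem_filter, Finset.mem_map, Finset.mem_univ, true_and,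
      Function.Embedding.coeFn_mk, key j]
    constructor
    · intro h; exact ⟨σ.symm j, by simpa using h, by simp⟩
    · rintro ⟨a, ha, rfl⟩; simpa using ha
  rw [h1, Finset.card_map]
  have h2 : (Finset.univ.filter fun j : Fin (n + 1) => j ≤ σ.symm i) = Finset.Iic (σ.symm i) := by
    ext j; simp
  rw [h2, Fin.card_Iic]

/-- membership characterization of the main event -/
lemma le_orderStat_iff {n k : ℕ} (hk : 1 ≤ k) {x : Fin (n + 1) → ℝ}
    (hx : Function.Injective x) (i : Fin (n + 1)) :
    x i ≤ orderStat k x ↔ rk x i ≤ k := by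
  unfold orderStat
  rw [le_sort_iff hx, rk_eq hx]
  have hle : ((Tuple.sort x).symm i : Fin (n + 1)).val ≤ n := Fin.is_le _
  rw [Fin.le_def]
  simp only []
  constructor <;> intro h <;> omega

/-- at most `k` indices have rank ≤ k. -/
lemma card_rk_le {n k : ℕ} {x : Fin (n + 1) → ℝ} (hx : Function.Injective x) :
    (Finset.univ.filter fun i => rk x i ≤ k).card ≤ k := by
  have h : ∀ i ∈ (Finset.univ.filter fun i => rk x i ≤ k),
      ((Tuple.sort x).symm i : Fin (n + 1)).val ∈ Finset.range k := by
    intro i hi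
    rw [Finset.mem_filter, rk_eq hx] at hi
    rw [Finset.mem_range]; omega
  calc (Finset.univ.filter fun i => rk x i ≤ k).card
      ≤ (Finset.range k).card := Finset.card_le_card_of_injOn
        (fun i => ((Tuple.sort x).symm i : Fin (n + 1)).val) h
        (fun a _ b _ hab => (Tuple.sort x).symm.injective (Fin.val_injective hab))
    _ = k := Finset.card_range k


/-- anti over-coverage upper bound for exchangeable, a.s. pairwise
distinct variables. -/
theorem exchangeable_quantile_upper_bound
    {Ω : Type*} [MeasurableSpace Ω] (P : Measure Ω) [IsProbabilityMeasure P]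
    (n : ℕ) (R : Fin (n + 1) → Ω → ℝ) (hmeas : ∀ i, Measurable (R i))
    (hexch : ∀ π : Equiv.Perm (Fin (n + 1)),
      P.map (fun ω => fun i => R (π i) ω) = P.map (fun ω => fun i => R i ω))
    (hdistinct : ∀ᵐ ω ∂P, Function.Injective (fun i => R i ω))
    (α : ℝ) (hα : α ∈ Set.Ioo (0 : ℝ) 1) :
    P {ω | R (Fin.last n) ω ≤
        orderStat ⌈(1 - α) * (n + 1)⌉₊ (fun i => R i ω)} ≤
      ENNReal.ofReal (1 - α + 1 / (n + 1)) := by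
  obtain ⟨hα0, hα1⟩ := hα
  set k : ℕ := ⌈(1 - α) * (n + 1)⌉₊ with hkdef
  have hkpos : 1 ≤ k := by
    rw [hkdef]
    have : (0:ℝ) < (1 - α) * (n + 1) := mul_pos (by linarith) (by positivity)
    exact Nat.one_le_ceil_iff.mpr this
  -- the rank events
  set A : Fin (n + 1) → Set Ω := fun i => {ω | rk (fun j => R j ω) i ≤ k} with hAdef
  -- measurability infrastructure
  have hrkmeas : ∀ i, Measurable (fun ω => rk (fun j => R j ω) i) := by
    intro i
    have : (fun ω => rk (fun j => R j ω) i) =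
        fun ω => ∑ j : Fin (n + 1), if R j ω ≤ R i ω then 1 else 0 := by
      funext ω; rw [rk, Finset.card_filter]
    rw [this]
    exact Finset.measurable_sum _ fun j _ =>
      Measurable.ite (measurableSet_le (hmeas j) (hmeas i)) measurable_const measurable_const
  have hAmeas : ∀ i, MeasurableSet (A i) := fun i =>
    (hrkmeas i) (MeasurableSet.of_discrete (s := Set.Iic k))
  -- exchangeability: all A i have the same probability
  have hF : Measurable (fun ω => fun i => R i ω) :=
    measurable_pi_lambda _ fun i => hmeas i
  have hswap : ∀ i, P (A i) = P (A (Fin.last n)) := by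
    intro i
    set π : Equiv.Perm (Fin (n + 1)) := Equiv.swap i (Fin.last n) with hπ
    set B : Set (Fin (n + 1) → ℝ) :=
      {x | (Finset.univ.filter fun j => x j ≤ x (Fin.last n)).card ≤ k} with hB
    have hBmeas : MeasurableSet B := by
      have hg : Measurable (fun x : Fin (n + 1) → ℝ =>
          (Finset.univ.filter fun j => x j ≤ x (Fin.last n)).card) := by
        have : (fun x : Fin (n + 1) → ℝ =>
            (Finset.univ.filter fun j => x j ≤ x (Fin.last n)).card) =
            fun x => ∑ j : Fin (n + 1), if x j ≤ x (Fin.last n) then 1 else 0 := by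
          funext x; rw [Finset.card_filter]
        rw [this]
        exact Finset.measurable_sum _ fun j _ => Measurable.ite
          (measurableSet_le (measurable_pi_apply j) (measurable_pi_apply (Fin.last n)))
          measurable_const measurable_const
      exact hg (MeasurableSet.of_discrete (s := Set.Iic k))
    have hGmeas : Measurable (fun ω => fun j => R (π j) ω) :=
      measurable_pi_lambda _ fun j => hmeas (π j)
    have h1 : A i = (fun ω => fun j => R (π j) ω) ⁻¹' B := by
      ext ω
      simp only [hAdef, hB, Set.mem_preimage, Set.mem_setOf_eq, rk]
      have hπlast : π (Fin.last n) = i := Equiv.swap_apply_right _ _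
      simp only [hπlast]
      have hcard : (Finset.univ.filter fun j => R (π j) ω ≤ R i ω).card =
          (Finset.univ.filter fun j => R j ω ≤ R i ω).card := by
        apply Finset.card_bij (fun j _ => π j)
        · intro a ha; rw [Finset.mem_filter] at *; exact ⟨Finset.mem_univ _, ha.2⟩
        · intro a _ b _ hab; exact π.injective hab
        · intro b hb
          refine ⟨π.symm b, ?_, by simp⟩
          rw [Finset.mem_filter] at *
          simp only [Equiv.apply_symm_apply]
          exact ⟨Finset.mem_univ _, hb.2⟩
      rw [hcard]
    have h2 : A (Fin.last n) = (fun ω => fun j => R j ω) ⁻¹' B := by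
      ext ω; simp [hAdef, hB, rk]
    rw [h1, h2, ← Measure.map_apply hGmeas hBmeas, ← Measure.map_apply hF hBmeas, hexch π]
  -- sum of probabilities bound
  have hsum : ∑ i : Fin (n + 1), P (A i) ≤ (k : ℝ≥0∞) := by
    have h1 : ∀ i : Fin (n + 1), P (A i) =
        ∫⁻ ω, (A i).indicator (fun _ => (1 : ℝ≥0∞)) ω ∂P := by
      intro i; exact (lintegral_indicator_one (hAmeas i)).symm
    calc ∑ i : Fin (n + 1), P (A i)
        = ∫⁻ ω, ∑ i : Fin (n + 1), (A i).indicator (fun _ => (1 : ℝ≥0∞)) ω ∂P := by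
          rw [lintegral_finset_sum _ fun i _ => measurable_const.indicator (hAmeas i)]
          exact Finset.sum_congr rfl fun i _ => h1 i
      _ ≤ ∫⁻ ω, (k : ℝ≥0∞) ∂P := by
          apply lintegral_mono_ae
          filter_upwards [hdistinct] with ω hω
          have : ∑ i : Fin (n + 1), (A i).indicator (fun _ => (1 : ℝ≥0∞)) ω =
              ((Finset.univ.filter fun i => ω ∈ A i).card : ℝ≥0∞) := by
            rw [Finset.card_filter, Nat.cast_sum]
            refine Finset.sum_congr rfl fun i _ => ?_
            by_cases h : ω ∈ A i <;> simp [h, Set.indicator_apply]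
          rw [this]
          have hcard : (Finset.univ.filter fun i => ω ∈ A i).card ≤ k := by
            have : (Finset.univ.filter fun i => ω ∈ A i) =
                (Finset.univ.filter fun i => rk (fun j => R j ω) i ≤ k) := by
              ext i; simp [hAdef]
            rw [this]; exact card_rk_le hω
          exact_mod_cast Nat.cast_le.mpr hcard
      _ = (k : ℝ≥0∞) := by rw [lintegral_const, measure_univ, mul_one]
  have hconst : ∑ i : Fin (n + 1), P (A i) = (n + 1 : ℝ≥0∞) * P (A (Fin.last n)) := by
    rw [Finset.sum_congr rfl fun i _ => hswap i, Finset.sum_const, Finset.card_univ,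
      Fintype.card_fin, nsmul_eq_mul]
    push_cast; ring
  -- the main event equals A (last) a.e.
  have haeeq : P {ω | R (Fin.last n) ω ≤
      orderStat k (fun i => R i ω)} = P (A (Fin.last n)) := by
    apply measure_congr
    rw [Filter.eventuallyEq_set]
    filter_upwards [hdistinct] with ω hω
    simp only [Set.mem_setOf_eq, hAdef]
    exact le_orderStat_iff hkpos hω (Fin.last n)
  rw [haeeq]
  -- final arithmetic
  have hmul : (n + 1 : ℝ≥0∞) * P (A (Fin.last n)) ≤ (k : ℝ≥0∞) := hconst ▸ hsum
  have hdiv : P (A (Fin.last n)) ≤ (k : ℝ≥0∞) / (n + 1 : ℝ≥0∞) := by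
    rw [ENNReal.le_div_iff_mul_le (by simp) (by simp)]
    rwa [mul_comm]
  refine hdiv.trans ?_
  have hn1 : (0:ℝ) < (n:ℝ) + 1 := by positivity
  have heq : (k : ℝ≥0∞) / (n + 1 : ℝ≥0∞) = ENNReal.ofReal ((k : ℝ) / ((n : ℝ) + 1)) := by
    rw [ENNReal.ofReal_div_of_pos hn1]
    congr 1
    · exact (ENNReal.ofReal_natCast k).symm
    · rw [ENNReal.ofReal_add (by positivity) zero_le_one]
      simp [ENNReal.ofReal_natCast]
  rw [heq]
  apply ENNReal.ofReal_le_ofReal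
  have hkle : (k : ℝ) < (1 - α) * (n + 1) + 1 := by
    rw [hkdef]
    exact Nat.ceil_lt_add_one (le_of_lt (mul_pos (by linarith) (by positivity)))
  rw [div_le_iff₀ hn1]
  have hinv : (1 / ((n:ℝ) + 1)) * ((n:ℝ) + 1) = 1 := by field_simp
  nlinarith [hinv]
end

section
/- Inspection paradox counterexample: let Y_1,...,Y_{n+1} be i.i.d. continuous real random variables (n ≥ 1) and let i_0 = argmax_i Y_i. Then the sequence obtained by swapping elements i_0 and 1 of (Y_1,...,Y_{n+1}) does not have the same joint distribution as (Y_1,...,Y_{n+1}); in particular, in the swapped sequence the first coordinate is almost surely the maximum, which occurs with probability 1/(n+1) for the original sequence. -/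
open MeasureTheory ProbabilityTheory
open scoped ENNReal

/-- An index achieving the maximum of `x`. -/
noncomputable def argmaxIdx {m : ℕ} (x : Fin (m + 1) → ℝ) : Fin (m + 1) :=
  Classical.choose (Finite.exists_max x)

/-- the inspection-paradox counterexample: for i.i.d. continuous
`Y_1, …, Y_{n+1}`, swapping the argmax position with position 1 changes the joint
distribution; in the swapped sequence the first coordinate is a.s. the maximum,
while for the original sequence the first coordinate is the maximum with
probability `1/(n+1)`. -/
theorem inspection_paradox
    {Ω : Type*} [MeasurableSpace Ω] (P : Measure Ω) [IsProbabilityMeasure P]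
    (n : ℕ) (hn : 1 ≤ n) (Y : Fin (n + 1) → Ω → ℝ)
    (hmeas : ∀ i, Measurable (Y i))
    (hindep : iIndepFun Y P)
    (hident : ∀ i j, P.map (Y i) = P.map (Y j))
    (hcont : ∀ (i : Fin (n + 1)) (x : ℝ), P.map (Y i) {x} = 0) :
    P.map (fun ω => fun j =>
        Y (Equiv.swap (argmaxIdx fun i => Y i ω) 0 j) ω) ≠
      P.map (fun ω => fun j => Y j ω) ∧
    P {ω | ∀ j, Y j ω ≤
        Y (Equiv.swap (argmaxIdx fun i => Y i ω) 0 0) ω} = 1 ∧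
    P {ω | ∀ j, Y j ω ≤ Y 0 ω} = ENNReal.ofReal (1 / (n + 1)) := by
  classical
  set μ : Measure ℝ := P.map (Y 0) with hμdef
  have hμprob : IsProbabilityMeasure μ := Measure.isProbabilityMeasure_map (hmeas 0).aemeasurable
  have htuple : Measurable (fun ω => fun j => Y j ω) := measurable_pi_lambda _ hmeas
  -- marginals
  have hmarg : ∀ i, P.map (Y i) = μ := fun i => hident i 0
  have hatomless : ∀ x : ℝ, μ {x} = 0 := fun x => hcont 0 x
  -- joint law is the product measure
  have hjoint : P.map (fun ω => fun j => Y j ω) = Measure.pi (fun _ : Fin (n + 1) => μ) := by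
    refine (Measure.pi_eq fun s hs => ?_).symm
    rw [Measure.map_apply htuple (MeasurableSet.univ_pi hs)]
    have hpre : (fun ω => fun j => Y j ω) ⁻¹' Set.pi Set.univ s = ⋂ i, Y i ⁻¹' s i := by
      ext ω; simp [Set.mem_pi]
    rw [hpre, hindep.meas_iInter fun i => ⟨s i, hs i, rfl⟩]
    refine Finset.prod_congr rfl fun i _ => ?_
    rw [← hmarg i, Measure.map_apply (hmeas i) (hs i)]
  -- the "max at i" sets
  set S : Fin (n + 1) → Set (Fin (n + 1) → ℝ) := fun i => {x | ∀ j, x j ≤ x i} with hSdef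
  have hSmeas : ∀ i, MeasurableSet (S i) := by
    intro i
    have : S i = ⋂ j, {x : Fin (n + 1) → ℝ | x j ≤ x i} := by ext x; simp [hSdef]
    rw [this]
    exact MeasurableSet.iInter fun j =>
      measurableSet_le (measurable_pi_apply j) (measurable_pi_apply i)
  set π : Measure (Fin (n + 1) → ℝ) := Measure.pi (fun _ : Fin (n + 1) => μ) with hπdef
  -- exchangeability: π (S i) = π (S 0)
  have hSswap : ∀ i, π (S i) = π (S 0) := by
    intro i
    have hmp := MeasureTheory.measurePreserving_piCongrLeft
      (fun _ : Fin (n + 1) => μ) (Equiv.swap i 0)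
    have key : ∀ (x : Fin (n+1) → ℝ) (a : Fin (n+1)),
        (MeasurableEquiv.piCongrLeft (fun _ : Fin (n+1) => ℝ) (Equiv.swap i 0)) x
          ((Equiv.swap i 0) a) = x a :=
      fun x a => MeasurableEquiv.piCongrLeft_apply_apply (β := fun _ : Fin (n+1) => ℝ) (Equiv.swap i 0) x a
    have key0 : ∀ (x : Fin (n+1) → ℝ),
        (MeasurableEquiv.piCongrLeft (fun _ : Fin (n+1) => ℝ) (Equiv.swap i 0)) x i = x 0 := by
      intro x
      have h := key x 0
      rwa [Equiv.swap_apply_right] at h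
    have hpre : (MeasurableEquiv.piCongrLeft (fun _ : Fin (n + 1) => ℝ)
        (Equiv.swap i 0)) ⁻¹' (S i) = S 0 := by
      ext x
      simp only [Set.mem_preimage, hSdef, Set.mem_setOf_eq]
      constructor
      · intro h j
        have h1 := h (Equiv.swap i 0 j)
        rwa [key, key0] at h1
      · intro h j
        obtain ⟨a, rfl⟩ := (Equiv.swap i 0).surjective j
        rw [key, key0]
        exact h a
    calc π (S i) = π ((MeasurableEquiv.piCongrLeft (fun _ : Fin (n + 1) => ℝ)
          (Equiv.swap i 0)) ⁻¹' (S i)) := (hmp.measure_preimage (hSmeas i).nullMeasurableSet).symm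
      _ = π (S 0) := by rw [hpre]
  -- P of the max events
  set A : Fin (n + 1) → Set Ω := fun i => {ω | ∀ j, Y j ω ≤ Y i ω} with hAdef
  have hAmeas : ∀ i, MeasurableSet (A i) := by
    intro i
    have : A i = ⋂ j, {ω | Y j ω ≤ Y i ω} := by ext ω; simp [hAdef]
    rw [this]
    exact MeasurableSet.iInter fun j => measurableSet_le (hmeas j) (hmeas i)
  have hPA : ∀ i, P (A i) = π (S i) := by
    intro i
    rw [← hjoint, Measure.map_apply htuple (hSmeas i)]
    rfl
  have hPAeq : ∀ i, P (A i) = P (A 0) := fun i => by rw [hPA, hSswap, ← hPA]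
  -- ties have probability zero
  have hties : ∀ i j : Fin (n + 1), i ≠ j → P {ω | Y i ω = Y j ω} = 0 := by
    intro i j hij
    have hIF : IndepFun (Y i) (Y j) P := hindep.indepFun hij
    have hpair : P.map (fun ω => (Y i ω, Y j ω)) = μ.prod μ := by
      rw [(indepFun_iff_map_prod_eq_prod_map_map (hmeas i).aemeasurable
        (hmeas j).aemeasurable).1 hIF, hmarg i, hmarg j]
    have hD : MeasurableSet {p : ℝ × ℝ | p.1 = p.2} :=
      measurableSet_eq_fun measurable_fst measurable_snd
    have hm : Measurable (fun ω => (Y i ω, Y j ω)) := (hmeas i).prodMk (hmeas j)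
    have : P {ω | Y i ω = Y j ω} = (μ.prod μ) {p : ℝ × ℝ | p.1 = p.2} := by
      rw [← hpair, Measure.map_apply hm hD]; rfl
    rw [this, Measure.prod_apply hD]
    have : ∀ a : ℝ, μ (Prod.mk a ⁻¹' {p : ℝ × ℝ | p.1 = p.2}) = 0 := by
      intro a
      have : Prod.mk a ⁻¹' {p : ℝ × ℝ | p.1 = p.2} = {a} := by
        ext b; simp [eq_comm]
      rw [this]; exact hatomless a
    simp [this, hatomless]
  set T : Set Ω := ⋃ (i : Fin (n+1)) (j : Fin (n+1)) (_ : i ≠ j), {ω | Y i ω = Y j ω} with hTdef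
  have hTmeas : MeasurableSet T := by
    refine MeasurableSet.iUnion fun i => MeasurableSet.iUnion fun j =>
      MeasurableSet.iUnion fun hij => measurableSet_eq_fun (hmeas i) (hmeas j)
  have hT0 : P T = 0 := by
    refine measure_iUnion_null fun i => measure_iUnion_null fun j => measure_iUnion_null fun hij =>
      hties i j hij
  -- the disjointified events
  set B : Fin (n + 1) → Set Ω := fun i => A i \ T with hBdef
  have hBmeas : ∀ i, MeasurableSet (B i) := fun i => (hAmeas i).diff hTmeas
  have hBdisj : Pairwise (Function.onFun Disjoint B) := by
    intro i j hij
    refine Set.disjoint_left.2 fun ω hωi hωj => ?_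
    have h1 : Y j ω ≤ Y i ω := hωi.1 j
    have h2 : Y i ω ≤ Y j ω := hωj.1 i
    exact hωi.2 (Set.mem_iUnion.2 ⟨i, Set.mem_iUnion.2 ⟨j, Set.mem_iUnion.2 ⟨hij, le_antisymm h2 h1⟩⟩⟩)
  have hBunion : (⋃ i, B i) = Tᶜ := by
    ext ω
    simp only [Set.mem_iUnion, hBdef, Set.mem_diff, Set.mem_compl_iff]
    constructor
    · rintro ⟨i, _, h⟩; exact h
    · intro h
      obtain ⟨i, hi⟩ := Finite.exists_max (fun i => Y i ω)
      exact ⟨i, hi, h⟩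
  have hsum : ∑ i, P (B i) = 1 := by
    have h := measure_iUnion (μ := P) hBdisj hBmeas
    rw [hBunion, measure_compl hTmeas (by simp [hT0]), hT0, tsum_fintype] at h
    simpa using h.symm
  have hPB : ∀ i, P (B i) = P (A 0) := by
    intro i
    rw [hBdef]
    simp only
    rw [measure_diff_null hT0]
    exact hPAeq i
  have hcard : (Finset.univ : Finset (Fin (n+1))).card = n + 1 := by simp
  have hsum2 : (n + 1 : ℝ≥0∞) * P (A 0) = 1 := by
    have h := hsum
    rw [Finset.sum_congr rfl fun i _ => hPB i, Finset.sum_const, hcard, nsmul_eq_mul] at h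
    rw [show ((n : ℝ≥0∞) + 1) = ((n + 1 : ℕ) : ℝ≥0∞) by push_cast; ring, h]
  have hne0 : (n + 1 : ℝ≥0∞) ≠ 0 := by simp
  have hnetop : (n + 1 : ℝ≥0∞) ≠ ⊤ := by simp
  have hPA0 : P (A 0) = (n + 1 : ℝ≥0∞)⁻¹ := by
    calc P (A 0) = (n + 1 : ℝ≥0∞)⁻¹ * ((n + 1 : ℝ≥0∞) * P (A 0)) := by
          rw [← mul_assoc, ENNReal.inv_mul_cancel hne0 hnetop, one_mul]
      _ = (n + 1 : ℝ≥0∞)⁻¹ := by rw [hsum2, mul_one]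
  have hofReal : ENNReal.ofReal (1 / (n + 1)) = (n + 1 : ℝ≥0∞)⁻¹ := by
    rw [one_div, ENNReal.ofReal_inv_of_pos (by positivity)]
    congr 1
    rw [show ((n : ℝ) + 1) = ((n + 1 : ℕ) : ℝ) by push_cast; ring, ENNReal.ofReal_natCast]
    push_cast
    ring
  -- part 2 set is univ
  have h2univ : {ω | ∀ j, Y j ω ≤ Y (Equiv.swap (argmaxIdx fun i => Y i ω) 0 0) ω} = Set.univ := by
    ext ω
    simp only [Set.mem_setOf_eq, Set.mem_univ, iff_true]
    intro j
    rw [Equiv.swap_apply_right]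
    exact Classical.choose_spec (Finite.exists_max fun i => Y i ω) j
  refine ⟨?_, by rw [h2univ]; simp, by rw [show {ω | ∀ j, Y j ω ≤ Y 0 ω} = A 0 from rfl, hPA0, hofReal]⟩
  -- part 1
  intro heq
  set g : Ω → Fin (n + 1) → ℝ := fun ω => fun j =>
    Y (Equiv.swap (argmaxIdx fun i => Y i ω) 0 j) ω with hgdef
  by_cases hg : AEMeasurable g P
  · have hgS : P.map g (S 0) = 1 := by
      rw [Measure.map_apply_of_aemeasurable hg (hSmeas 0)]
      have : g ⁻¹' S 0 = Set.univ := by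
        ext ω
        simp only [Set.mem_preimage, hSdef, Set.mem_setOf_eq, Set.mem_univ, iff_true, hgdef]
        intro j
        rw [Equiv.swap_apply_right]
        exact Classical.choose_spec (Finite.exists_max fun i => Y i ω) _
      rw [this]; simp
    have hYS : P.map (fun ω => fun j => Y j ω) (S 0) = (n + 1 : ℝ≥0∞)⁻¹ := by
      rw [Measure.map_apply htuple (hSmeas 0)]
      exact hPA0
    rw [heq, hYS] at hgS
    have : (n + 1 : ℝ≥0∞) = 1 := ENNReal.inv_eq_one.1 hgS
    have hn1 : ((n : ℝ≥0∞) + 1 = 0 + 1) := by rw [this]; ring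
    have : (n : ℝ≥0∞) = 0 := by
      simpa using hn1
    have : n = 0 := by exact_mod_cast this
    omega
  · rw [Measure.map_of_not_aemeasurable hg] at heq
    have : (0 : Measure (Fin (n+1) → ℝ)) Set.univ = P.map (fun ω => fun j => Y j ω) Set.univ := by
      rw [heq]
    rw [Measure.map_apply htuple MeasurableSet.univ] at this
    simp at this
end
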